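/- Let a, b, c, d, k, l be integers with a*d − b*c = 1 and |a + d| > 2, and let G be the group with presentation ⟨x, y, z, t | t x t⁻¹ = x^a y^c z^k, t y t⁻¹ = x^b y^d z^l, t z t⁻¹ = z, [x,y] = z, x z = z x, y z = z y⟩, where [x,y] = x y x⁻¹ y⁻¹. Then there exists a finite abelian group F of cardinality |2 − a − d| such that the abelianization of G is isomorphic to ℤ × F, with the infinite cyclic factor generated by the class of t. In particular, the group of group homomorphisms G → ℤ is infinite cyclic. -/

import Mathlib

namespace Stmt13

/-- The free group generators `x, y, z, t` for the `Sol⁴₁` group. -/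
private abbrev gx : FreeGroup (Fin 4) := FreeGroup.of 0
private abbrev gy : FreeGroup (Fin 4) := FreeGroup.of 1
private abbrev gz : FreeGroup (Fin 4) := FreeGroup.of 2
private abbrev gt : FreeGroup (Fin 4) := FreeGroup.of 3

/-- The relators of the presentation `⟨x, y, z, t | t x t⁻¹ = xᵃ yᶜ zᵏ, t y t⁻¹ = xᵇ yᵈ zˡ,
t z t⁻¹ = z, [x,y] = z, x z = z x, y z = z y⟩`, where `[x,y] = x y x⁻¹ y⁻¹`. -/
def solRels (a b c d k l : ℤ) : Set (FreeGroup (Fin 4)) :=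
  { gt * gx * gt⁻¹ * (gx ^ a * gy ^ c * gz ^ k)⁻¹,
    gt * gy * gt⁻¹ * (gx ^ b * gy ^ d * gz ^ l)⁻¹,
    gt * gz * gt⁻¹ * gz⁻¹,
    gx * gy * gx⁻¹ * gy⁻¹ * gz⁻¹,
    gx * gz * gx⁻¹ * gz⁻¹,
    gy * gz * gy⁻¹ * gz⁻¹ }

/-- `SolG a b c d k l`, the fundamental group (model) of a closed oriented `Sol⁴₁`-manifold. -/
abbrev SolG (a b c d k l : ℤ) : Type := PresentedGroup (solRels a b c d k l)

/-- The image of the generator `t` in `SolG a b c d k l`. -/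
def tS (a b c d k l : ℤ) : SolG a b c d k l := PresentedGroup.of 3

/-! ### Auxiliary results -/

section aux
variable {a b c d k l : ℤ}

lemma rel_eq_one {r : FreeGroup (Fin 4)} (hr : r ∈ solRels a b c d k l) :
    PresentedGroup.mk (solRels a b c d k l) r = 1 :=
  (QuotientGroup.eq_one_iff r).2 (Subgroup.subset_normalClosure hr)

/-- The three key relations satisfied by the images of the generators under any hom. -/
lemma hom_rels {C : Type*} [Group C] (f : SolG a b c d k l →* C) :
    f (.of 3) * f (.of 0) * (f (.of 3))⁻¹ *
        (f (.of 0) ^ a * f (.of 1) ^ c * f (.of 2) ^ k)⁻¹ = 1 ∧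
      f (.of 3) * f (.of 1) * (f (.of 3))⁻¹ *
        (f (.of 0) ^ b * f (.of 1) ^ d * f (.of 2) ^ l)⁻¹ = 1 ∧
      f (.of 0) * f (.of 1) * (f (.of 0))⁻¹ * (f (.of 1))⁻¹ * (f (.of 2))⁻¹ = 1 := by
  refine ⟨?_, ?_, ?_⟩
  · have h := congrArg f (rel_eq_one (a := a) (b := b) (c := c) (d := d) (k := k) (l := l)
      (Set.mem_insert _ _))
    simp [map_mul, map_inv, map_zpow] at h ⊢; exact h
  · have h := congrArg f (rel_eq_one (a := a) (b := b) (c := c) (d := d) (k := k) (l := l)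
      (show _ ∈ solRels a b c d k l from by right; left; rfl))
    simp [map_mul, map_inv, map_zpow] at h ⊢; exact h
  · have h := congrArg f (rel_eq_one (a := a) (b := b) (c := c) (d := d) (k := k) (l := l)
      (show _ ∈ solRels a b c d k l from by right; right; right; left; rfl))
    simp [map_mul, map_inv, map_zpow] at h ⊢; exact h

lemma det_ne (h2 : 2 < |a + d|) : 2 - a - d ≠ 0 := by
  intro h
  have : a + d = 2 := by omega
  rw [this] at h2; norm_num at h2

lemma hom_int_gens (h1 : a * d - b * c = 1) (h2 : 2 < |a + d|)
    (f : SolG a b c d k l →* Multiplicative ℤ) :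
    f (.of 0) = 1 ∧ f (.of 1) = 1 ∧ f (.of 2) = 1 := by
  obtain ⟨E1, E2, E4⟩ := hom_rels f
  set u := Multiplicative.toAdd (f (.of 0)) with hu
  set v := Multiplicative.toAdd (f (.of 1)) with hv
  set w := Multiplicative.toAdd (f (.of 2)) with hw
  have e1 : u - (a*u + c*v + k*w) = 0 := by
    have h := congrArg Multiplicative.toAdd E1
    simp only [toAdd_mul, toAdd_inv, toAdd_zpow, smul_eq_mul, toAdd_one] at h
    linarith
  have e2 : v - (b*u + d*v + l*w) = 0 := by
    have h := congrArg Multiplicative.toAdd E2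
    simp only [toAdd_mul, toAdd_inv, toAdd_zpow, smul_eq_mul, toAdd_one] at h
    linarith
  have hwz : w = 0 := by
    have h := congrArg Multiplicative.toAdd E4
    simp only [toAdd_mul, toAdd_inv, toAdd_zpow, smul_eq_mul, toAdd_one] at h
    linarith
  have hn := det_ne h2
  rw [hwz] at e1 e2
  have hu0 : u = 0 := by
    have : u * (2 - a - d) = 0 := by linear_combination (1 - d) * e1 + c * e2 - u * h1
    exact (mul_eq_zero.1 this).resolve_right hn
  have hv0 : v = 0 := by
    have : v * (2 - a - d) = 0 := by linear_combination b * e1 + (1 - a) * e2 - v * h1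
    exact (mul_eq_zero.1 this).resolve_right hn
  refine ⟨?_, ?_, ?_⟩
  · have : Multiplicative.toAdd (f (.of 0)) = (0 : ℤ) := hu0
    exact Multiplicative.toAdd.injective (by simpa using this)
  · have : Multiplicative.toAdd (f (.of 1)) = (0 : ℤ) := hv0
    exact Multiplicative.toAdd.injective (by simpa using this)
  · have : Multiplicative.toAdd (f (.of 2)) = (0 : ℤ) := hwz
    exact Multiplicative.toAdd.injective (by simpa using this)

end aux

section part2
variable (a b c d k l : ℤ)

lemma lift_rels (m : Multiplicative ℤ) :
    ∀ r ∈ solRels a b c d k l,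
      FreeGroup.lift (![1, 1, 1, m] : Fin 4 → Multiplicative ℤ) r = 1 := by
  intro r hr
  simp only [solRels, Set.mem_insert_iff, Set.mem_singleton_iff] at hr
  rcases hr with rfl | rfl | rfl | rfl | rfl | rfl <;>
    simp [map_mul, map_inv, map_zpow]

lemma part2 (h1 : a * d - b * c = 1) (h2 : 2 < |a + d|) :
    Nonempty ((SolG a b c d k l →* Multiplicative ℤ) ≃* Multiplicative ℤ) := by
  refine ⟨{ toFun := fun f => f (.of 3),
            invFun := fun m => PresentedGroup.toGroup (lift_rels a b c d k l m),
            left_inv := ?_, right_inv := ?_, map_mul' := fun f g => rfl }⟩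
  · intro f
    obtain ⟨h0, h1', h2'⟩ := hom_int_gens h1 h2 f
    ext i
    fin_cases i <;> simp [PresentedGroup.toGroup.of, h0, h1', h2']
  · intro m
    simp [PresentedGroup.toGroup.of]

end part2

/-! ### Cardinality of the quotient of `ℤ²` by the span of two independent vectors -/

open Submodule in
lemma card_quot_span_pair (v1 v2 : Fin 2 → ℤ)
    (hd : v1 0 * v2 1 - v1 1 * v2 0 ≠ 0) :
    Finite ((Fin 2 → ℤ) ⧸ Submodule.span ℤ {v1, v2}) ∧
      Nat.card ((Fin 2 → ℤ) ⧸ Submodule.span ℤ {v1, v2})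
        = (v1 0 * v2 1 - v1 1 * v2 0).natAbs := by
  set n : ℤ := v1 0 * v2 1 - v1 1 * v2 0 with hn
  set S : Submodule ℤ (Fin 2 → ℤ) := Submodule.span ℤ {v1, v2} with hS
  have hv1 : v1 ∈ S := subset_span (Set.mem_insert _ _)
  have hv2 : v2 ∈ S := subset_span (Set.mem_insert_of_mem _ rfl)
  -- n • basis vectors lie in S
  have he0 : (n • Pi.single (0 : Fin 2) (1 : ℤ)) ∈ S := by
    have : n • Pi.single (0 : Fin 2) (1:ℤ) = v2 1 • v1 + (-(v1 1)) • v2 := by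
      funext i; fin_cases i <;> simp [Pi.single_apply] <;> ring
    rw [this]; exact add_mem (smul_mem _ _ hv1) (smul_mem _ _ hv2)
  have he1 : (n • Pi.single (1 : Fin 2) (1 : ℤ)) ∈ S := by
    have : n • Pi.single (1 : Fin 2) (1:ℤ) = (-(v2 0)) • v1 + (v1 0) • v2 := by
      funext i; fin_cases i <;> simp [Pi.single_apply] <;> ring
    rw [this]; exact add_mem (smul_mem _ _ hv1) (smul_mem _ _ hv2)
  -- finiteness
  have hfin : Finite ((Fin 2 → ℤ) ⧸ S) := by
    set P : Submodule ℤ (Fin 2 → ℤ) :=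
      Submodule.pi Set.univ (fun _ => Ideal.span {n}) with hP
    have hPS : P ≤ S := by
      intro x hx
      obtain ⟨c0, hc0⟩ := Ideal.mem_span_singleton'.1 (hx 0 (Set.mem_univ _))
      obtain ⟨c1, hc1⟩ := Ideal.mem_span_singleton'.1 (hx 1 (Set.mem_univ _))
      have : x = c0 • (n • Pi.single (0:Fin 2) (1:ℤ)) + c1 • (n • Pi.single (1:Fin 2) (1:ℤ)) := by
        funext i; fin_cases i <;>
          simp [Pi.single_apply, ← hc0, ← hc1, mul_comm]
      rw [this]
      exact add_mem (smul_mem _ _ he0) (smul_mem _ _ he1)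
    have h1 : Finite ((Fin 2 → ℤ) ⧸ P) := by
      have e := Submodule.quotientPi (R := ℤ) (Ms := fun _ : Fin 2 => ℤ)
        (fun _ => Ideal.span {n})
      have : ∀ i : Fin 2, Finite (ℤ ⧸ (fun _ : Fin 2 => Ideal.span {n}) i) := by
        intro i
        have : NeZero n.natAbs := ⟨Int.natAbs_ne_zero.2 hd⟩
        exact Finite.of_equiv _ (Int.quotientSpanEquivZMod n).toEquiv.symm
      exact Finite.of_equiv _ e.toEquiv.symm
    exact Finite.of_surjective (Submodule.mapQ P S LinearMap.id hPS)
      (fun x => Quotient.inductionOn' x (fun y => ⟨Submodule.Quotient.mk y, rfl⟩))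
  refine ⟨hfin, ?_⟩
  have hidx : S.toAddSubgroup.index = Nat.card ((Fin 2 → ℤ) ⧸ S) := rfl
  have hne : S.toAddSubgroup.index ≠ 0 := by
    rw [hidx]
    exact Nat.card_ne_zero.2 ⟨⟨Submodule.Quotient.mk 0⟩, hfin⟩
  obtain ⟨m, snf⟩ := S.smithNormalForm (Pi.basisFun ℤ (Fin 2))
  have hm : m = 2 := by simpa using snf.toAddSubgroup_index_ne_zero_iff.1 hne
  subst hm
  -- index = ∏ |a i|
  have hprod : S.toAddSubgroup.index = (snf.a 0).natAbs * (snf.a 1).natAbs := by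
    rw [snf.toAddSubgroup_index_eq_pow_mul_prod]
    simp [Ideal.span_singleton_toAddSubgroup_eq_zmultiples, Int.index_zmultiples,
      Fin.prod_univ_two]
  -- the linear map with columns v1 v2
  set ψ : (Fin 2 → ℤ) →ₗ[ℤ] (Fin 2 → ℤ) :=
    (Pi.basisFun ℤ (Fin 2)).constr ℕ ![v1, v2] with hψ
  have hψapp : ∀ x : Fin 2 → ℤ, ψ x = x 0 • v1 + x 1 • v2 := by
    intro x
    rw [hψ, Module.Basis.constr_apply_fintype]
    simp [Fin.sum_univ_two]
  have hrange : LinearMap.range ψ = S := by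
    rw [hψ, Module.Basis.constr_range]
    congr 1
    ext w
    constructor
    · rintro ⟨i, rfl⟩; fin_cases i
      · exact Set.mem_insert _ _
      · exact Set.mem_insert_of_mem _ rfl
    · rintro (rfl | rfl)
      exacts [⟨0, rfl⟩, ⟨1, rfl⟩]
  have hdet : LinearMap.det ψ = n := by
    rw [← LinearMap.det_toMatrix (Pi.basisFun ℤ (Fin 2)), Matrix.det_fin_two]
    simp [LinearMap.toMatrix_apply, hψapp, Pi.single_apply]
    ring
  have hinj : Function.Injective ψ := by
    rw [← LinearMap.ker_eq_bot]
    ext x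
    simp only [LinearMap.mem_ker, Submodule.mem_bot]
    constructor
    · intro hx
      have E0 : x 0 * v1 0 + x 1 * v2 0 = 0 := by
        have := congrFun (hψapp x ▸ hx) 0; simpa [smul_eq_mul] using this
      have E1 : x 0 * v1 1 + x 1 * v2 1 = 0 := by
        have := congrFun (hψapp x ▸ hx) 1; simpa [smul_eq_mul] using this
      have hx0 : x 0 = 0 := by
        have : x 0 * n = 0 := by rw [hn]; linear_combination v2 1 * E0 - v2 0 * E1
        exact (mul_eq_zero.1 this).resolve_right hd
      have hx1 : x 1 = 0 := by
        have : x 1 * n = 0 := by rw [hn]; linear_combination v1 0 * E1 - v1 1 * E0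
        exact (mul_eq_zero.1 this).resolve_right hd
      funext i; fin_cases i <;> assumption
    · rintro rfl; exact map_zero ψ
  -- the two equivalences (Fin 2 → ℤ) ≃ₗ S
  have hmem : ∀ x, ψ x ∈ S := fun x => hrange ▸ LinearMap.mem_range_self ψ x
  set ψ' : (Fin 2 → ℤ) →ₗ[ℤ] S := ψ.codRestrict S hmem with hψ'
  have hψ'bij : Function.Bijective ψ' := by
    constructor
    · intro x y hxy
      apply hinj
      have := congrArg (Subtype.val) hxy
      exact this
    · rintro ⟨s, hs⟩
      rw [← hrange] at hs
      obtain ⟨x, hx⟩ := hs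
      exact ⟨x, Subtype.ext hx⟩
  set e₁ : (Fin 2 → ℤ) ≃ₗ[ℤ] S := LinearEquiv.ofBijective ψ' hψ'bij with he₁
  set e₂ : (Fin 2 → ℤ) ≃ₗ[ℤ] S :=
    (snf.bM.equivFun.trans snf.bN.equivFun.symm :
      (Fin 2 → ℤ) ≃ₗ[ℤ] S) with he₂
  have h₁ : S.subtype ∘ₗ (e₁ : (Fin 2 → ℤ) →ₗ[ℤ] S) = ψ := by
    ext x j
    rfl
  have he₂app : ∀ j, e₂ (snf.bM j) = snf.bN j := by
    intro j
    rw [he₂]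
    simp only [LinearEquiv.trans_apply, Module.Basis.equivFun_apply, Module.Basis.repr_self]
    rw [Module.Basis.equivFun_symm_apply]
    rw [Fin.sum_univ_two]
    fin_cases j <;> simp [Finsupp.single_apply]
  have hmat : ∀ i j, LinearMap.toMatrix snf.bM snf.bM
      (S.subtype ∘ₗ (e₂ : (Fin 2 → ℤ) →ₗ[ℤ] S)) i j
      = snf.a j * (if snf.f j = i then 1 else 0) := by
    intro i j
    rw [LinearMap.toMatrix_apply]
    simp only [LinearMap.coe_comp, LinearEquiv.coe_coe, Function.comp_apply, Submodule.coe_subtype]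
    rw [he₂app j]
    rw [show ((snf.bN j : Fin 2 → ℤ)) = snf.a j • snf.bM (snf.f j) from snf.snf j,
      map_smul, Module.Basis.repr_self]
    simp [Finsupp.single_apply, mul_ite]
  have hf : (snf.f 0 = 0 ∧ snf.f 1 = 1) ∨ (snf.f 0 = 1 ∧ snf.f 1 = 0) := by
    have hne : ((snf.f 0 : ℕ)) ≠ ((snf.f 1 : ℕ)) := by
      intro h
      exact absurd (snf.f.injective (Fin.ext h)) (by simp)
    have h0 := (snf.f 0).isLt
    have h1 := (snf.f 1).isLt
    have : ((snf.f 0 : ℕ) = 0 ∧ (snf.f 1 : ℕ) = 1) ∨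
        ((snf.f 0 : ℕ) = 1 ∧ (snf.f 1 : ℕ) = 0) := by omega
    rcases this with ⟨ha', hb'⟩ | ⟨ha', hb'⟩
    · exact Or.inl ⟨Fin.ext ha', Fin.ext hb'⟩
    · exact Or.inr ⟨Fin.ext ha', Fin.ext hb'⟩
  have key : (LinearMap.det (S.subtype ∘ₗ (e₂ : (Fin 2 → ℤ) →ₗ[ℤ] S))).natAbs
      = (snf.a 0).natAbs * (snf.a 1).natAbs := by
    rw [← LinearMap.det_toMatrix snf.bM, Matrix.det_fin_two, hmat, hmat, hmat, hmat]
    rcases hf with ⟨hf0, hf1⟩ | ⟨hf0, hf1⟩ <;>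
      simp [hf0, hf1, Int.natAbs_mul, Int.natAbs_neg, mul_comm]
  calc Nat.card ((Fin 2 → ℤ) ⧸ S) = S.toAddSubgroup.index := hidx.symm
    _ = (snf.a 0).natAbs * (snf.a 1).natAbs := hprod
    _ = (LinearMap.det (S.subtype ∘ₗ (e₂ : (Fin 2 → ℤ) →ₗ[ℤ] S))).natAbs := key.symm
    _ = (LinearMap.det (S.subtype ∘ₗ (e₁ : (Fin 2 → ℤ) →ₗ[ℤ] S))).natAbs :=
        Int.natAbs_eq_iff_associated.2 (LinearMap.associated_det_comp_equiv _ _ _)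
    _ = (LinearMap.det ψ).natAbs := by rw [h₁]
    _ = n.natAbs := by rw [hdet]

/-! ### The abelianization -/

section iso
variable (a b c d k l : ℤ)

/-- The two relation vectors. -/
private def vv1 (a c : ℤ) : Fin 2 → ℤ := ![1 - a, -c]
private def vv2 (b d : ℤ) : Fin 2 → ℤ := ![-b, 1 - d]

private abbrev SS (a b c d : ℤ) : Submodule ℤ (Fin 2 → ℤ) :=
  Submodule.span ℤ {vv1 a c, vv2 b d}

private abbrev QQ (a b c d : ℤ) : Type := (Fin 2 → ℤ) ⧸ SS a b c d

private def q1 (a b c d : ℤ) : QQ a b c d := Submodule.Quotient.mk (Pi.single 0 1)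
private def q2 (a b c d : ℤ) : QQ a b c d := Submodule.Quotient.mk (Pi.single 1 1)

lemma hq1 : (1 - a) • q1 a b c d + (-c) • q2 a b c d = 0 := by
  rw [q1, q2, ← Submodule.Quotient.mk_smul, ← Submodule.Quotient.mk_smul,
    ← Submodule.Quotient.mk_add, Submodule.Quotient.mk_eq_zero]
  have : (1 - a) • Pi.single (0 : Fin 2) (1:ℤ) + (-c) • Pi.single (1 : Fin 2) (1:ℤ)
      = vv1 a c := by
    funext i; fin_cases i <;> simp [vv1, Pi.single_apply]
  rw [this]
  exact Submodule.subset_span (Set.mem_insert _ _)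

lemma hq2 : (-b) • q1 a b c d + (1 - d) • q2 a b c d = 0 := by
  rw [q1, q2, ← Submodule.Quotient.mk_smul, ← Submodule.Quotient.mk_smul,
    ← Submodule.Quotient.mk_add, Submodule.Quotient.mk_eq_zero]
  have : (-b) • Pi.single (0 : Fin 2) (1:ℤ) + (1 - d) • Pi.single (1 : Fin 2) (1:ℤ)
      = vv2 b d := by
    funext i; fin_cases i <;> simp [vv2, Pi.single_apply]
  rw [this]
  exact Submodule.subset_span (Set.mem_insert_of_mem _ rfl)

private def φ2fun : Fin 4 → Multiplicative (QQ a b c d) :=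
  ![Multiplicative.ofAdd (q1 a b c d), Multiplicative.ofAdd (q2 a b c d), 1, 1]

lemma lift_φ2 : ∀ r ∈ solRels a b c d k l,
    FreeGroup.lift (φ2fun a b c d) r = 1 := by
  intro r hr
  simp only [solRels, Set.mem_insert_iff, Set.mem_singleton_iff] at hr
  have key1 := hq1 (a := a) (b := b) (c := c) (d := d)
  have key2 := hq2 (a := a) (b := b) (c := c) (d := d)
  rcases hr with rfl | rfl | rfl | rfl | rfl | rfl <;>
  · apply Multiplicative.toAdd.injective
    simp only [map_mul, map_inv, map_zpow, FreeGroup.lift_apply_of, φ2fun,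
      Matrix.cons_val_zero, Matrix.cons_val_one, Matrix.head_cons,
      Matrix.cons_val_two, Matrix.tail_cons, Matrix.cons_val_three,
      toAdd_mul, toAdd_inv, toAdd_zpow, toAdd_ofAdd, toAdd_one]
    first
      | module
      | ((conv_rhs => rw [← key1]); module)
      | ((conv_rhs => rw [← key2]); module)

lemma lift_fT : ∀ r ∈ solRels a b c d k l,
    FreeGroup.lift (fun i => ((![1, 1, 1, Multiplicative.ofAdd 1] : Fin 4 → Multiplicative ℤ) i,
      φ2fun a b c d i)) r = 1 := by
  intro r hr
  have : FreeGroup.lift (fun i =>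
      ((![1, 1, 1, Multiplicative.ofAdd 1] : Fin 4 → Multiplicative ℤ) i, φ2fun a b c d i)) =
      (FreeGroup.lift (![1, 1, 1, Multiplicative.ofAdd 1] : Fin 4 → Multiplicative ℤ)).prod
        (FreeGroup.lift (φ2fun a b c d)) := by
    apply FreeGroup.ext_hom
    intro i
    simp [MonoidHom.prod_apply]
  rw [this, MonoidHom.prod_apply, lift_rels a b c d k l _ r hr, lift_φ2 a b c d k l r hr]
  rfl

private noncomputable def φA (a b c d k l : ℤ) :
    Abelianization (SolG a b c d k l) →* Multiplicative ℤ × Multiplicative (QQ a b c d) :=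
  Abelianization.lift (PresentedGroup.toGroup (lift_fT a b c d k l))

lemma φA_of (i : Fin 4) : φA a b c d k l (Abelianization.of (.of i)) =
    ((![1, 1, 1, Multiplicative.ofAdd 1] : Fin 4 → Multiplicative ℤ) i, φ2fun a b c d i) := by
  simp [φA, Abelianization.lift_apply_of, PresentedGroup.toGroup.of]

lemma hZ1 : (Abelianization.of (PresentedGroup.of (rels := solRels a b c d k l) 2)) = 1 := by
  obtain ⟨E1, E2, E4⟩ := hom_rels (k := k) (l := l) (Abelianization.of (G := SolG a b c d k l))
  set X := Abelianization.of (PresentedGroup.of (rels := solRels a b c d k l) 0) with hX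
  set Y := Abelianization.of (PresentedGroup.of (rels := solRels a b c d k l) 1) with hY
  set Z := Abelianization.of (PresentedGroup.of (rels := solRels a b c d k l) 2) with hZ
  have : Z⁻¹ = 1 := by
    calc Z⁻¹ = X * Y * X⁻¹ * Y⁻¹ * Z⁻¹ := by rw [mul_comm X Y]; group
      _ = 1 := E4
  exact inv_eq_one.1 this

lemma hx_add :
    (1 - a) • Additive.ofMul (Abelianization.of (PresentedGroup.of (rels := solRels a b c d k l) 0))
      + (-c) • Additive.ofMul (Abelianization.of (PresentedGroup.of (rels := solRels a b c d k l) 1))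
      = 0 := by
  obtain ⟨E1, E2, E4⟩ := hom_rels (k := k) (l := l) (Abelianization.of (G := SolG a b c d k l))
  set X := Abelianization.of (PresentedGroup.of (rels := solRels a b c d k l) 0) with hX
  set Y := Abelianization.of (PresentedGroup.of (rels := solRels a b c d k l) 1) with hY
  set T := Abelianization.of (PresentedGroup.of (rels := solRels a b c d k l) 3) with hT
  have E1' : X * (X ^ a * Y ^ c) ⁻¹ = 1 := by
    have : X * (X ^ a * Y ^ c * (Abelianization.of
        (PresentedGroup.of (rels := solRels a b c d k l) 2)) ^ k)⁻¹ = 1 := by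
      calc X * (X ^ a * Y ^ c * _ ^ k)⁻¹
          = T * X * T⁻¹ * (X ^ a * Y ^ c * _ ^ k)⁻¹ := by rw [mul_comm T X]; group
        _ = 1 := E1
    simpa [hZ1 a b c d k l] using this
  have h := congrArg Additive.ofMul E1'
  simp only [ofMul_mul, ofMul_inv, ofMul_zpow, ofMul_one] at h
  rw [show (1 - a) • Additive.ofMul X + (-c) • Additive.ofMul Y
    = Additive.ofMul X + -(a • Additive.ofMul X + c • Additive.ofMul Y) from by module]
  exact h

lemma hy_add :
    (-b) • Additive.ofMul (Abelianization.of (PresentedGroup.of (rels := solRels a b c d k l) 0))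
      + (1 - d) • Additive.ofMul (Abelianization.of (PresentedGroup.of (rels := solRels a b c d k l) 1))
      = 0 := by
  obtain ⟨E1, E2, E4⟩ := hom_rels (k := k) (l := l) (Abelianization.of (G := SolG a b c d k l))
  set X := Abelianization.of (PresentedGroup.of (rels := solRels a b c d k l) 0) with hX
  set Y := Abelianization.of (PresentedGroup.of (rels := solRels a b c d k l) 1) with hY
  set T := Abelianization.of (PresentedGroup.of (rels := solRels a b c d k l) 3) with hT
  have E2' : Y * (X ^ b * Y ^ d) ⁻¹ = 1 := by
    have : Y * (X ^ b * Y ^ d * (Abelianization.of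
        (PresentedGroup.of (rels := solRels a b c d k l) 2)) ^ l)⁻¹ = 1 := by
      calc Y * (X ^ b * Y ^ d * _ ^ l)⁻¹
          = T * Y * T⁻¹ * (X ^ b * Y ^ d * _ ^ l)⁻¹ := by rw [mul_comm T Y]; group
        _ = 1 := E2
    simpa [hZ1 a b c d k l] using this
  have h := congrArg Additive.ofMul E2'
  simp only [ofMul_mul, ofMul_inv, ofMul_zpow, ofMul_one] at h
  rw [show (-b) • Additive.ofMul X + (1 - d) • Additive.ofMul Y
    = Additive.ofMul Y + -(b • Additive.ofMul X + d • Additive.ofMul Y) from by module]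
  exact h

end iso

/-- Let `a, b, c, d, k, l` be integers with `a*d − b*c = 1` and
`|a + d| > 2`, and let `G` be the group presented as above. Then there is a finite abelian
group `F` of cardinality `|2 − a − d|` such that the abelianization of `G` is isomorphic to
`ℤ × F`, with the infinite cyclic factor generated by the class of `t`; in particular the
group of homomorphisms `G → ℤ` is infinite cyclic. -/
theorem stmt13 (a b c d k l : ℤ) (h1 : a * d - b * c = 1) (h2 : 2 < |a + d|) :
    ∃ (F : Type) (_ : CommGroup F), Finite F ∧ Nat.card F = (2 - a - d).natAbs ∧
      (∃ e : Abelianization (SolG a b c d k l) ≃* Multiplicative ℤ × F,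
        e (Abelianization.of (tS a b c d k l)) = (Multiplicative.ofAdd (1 : ℤ), 1)) ∧
      Nonempty ((SolG a b c d k l →* Multiplicative ℤ) ≃* Multiplicative ℤ) := by
  classical
  have hdet : vv1 a c 0 * vv2 b d 1 - vv1 a c 1 * vv2 b d 0 = 2 - a - d := by
    simp only [vv1, vv2, Matrix.cons_val_zero, Matrix.cons_val_one, Matrix.head_cons]
    linear_combination h1
  have hdne : vv1 a c 0 * vv2 b d 1 - vv1 a c 1 * vv2 b d 0 ≠ 0 := by
    rw [hdet]; exact det_ne h2
  obtain ⟨hfinQ, hcardQ⟩ := card_quot_span_pair (vv1 a c) (vv2 b d) hdne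
  refine ⟨Multiplicative (QQ a b c d), inferInstance, ?_, ?_, ?_,
    part2 a b c d k l h1 h2⟩
  · exact Finite.of_equiv _ Multiplicative.ofAdd
  · calc Nat.card (Multiplicative (QQ a b c d)) = Nat.card (QQ a b c d) :=
        Nat.card_congr Multiplicative.toAdd
      _ = (2 - a - d).natAbs := by rw [hcardQ, hdet]
  -- the isomorphism
  set X := Abelianization.of (PresentedGroup.of (rels := solRels a b c d k l) 0) with hX
  set Y := Abelianization.of (PresentedGroup.of (rels := solRels a b c d k l) 1) with hY
  set α : (Fin 2 → ℤ) →ₗ[ℤ] Additive (Abelianization (SolG a b c d k l)) :=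
    (Pi.basisFun ℤ (Fin 2)).constr ℕ ![Additive.ofMul X, Additive.ofMul Y] with hα
  have hαapp : ∀ v : Fin 2 → ℤ,
      α v = v 0 • Additive.ofMul X + v 1 • Additive.ofMul Y := by
    intro v
    rw [hα, Module.Basis.constr_apply_fintype]
    simp [Fin.sum_univ_two]
  have hker : SS a b c d ≤ LinearMap.ker α := by
    rw [Submodule.span_le]
    intro w hw
    simp only [Set.mem_insert_iff, Set.mem_singleton_iff] at hw
    rcases hw with rfl | rfl
    · have := hx_add a b c d k l
      simp only [SetLike.mem_coe, LinearMap.mem_ker, hαapp, vv1,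
        Matrix.cons_val_zero, Matrix.cons_val_one, Matrix.head_cons]
      exact this
    · have := hy_add a b c d k l
      simp only [SetLike.mem_coe, LinearMap.mem_ker, hαapp, vv2,
        Matrix.cons_val_zero, Matrix.cons_val_one, Matrix.head_cons]
      exact this
  set β := (SS a b c d).liftQ α hker with hβ
  set TA := Abelianization.of (tS a b c d k l) with hTA
  set ψF : Multiplicative (QQ a b c d) →* Abelianization (SolG a b c d k l) :=
    { toFun := fun q => Additive.toMul (β (Multiplicative.toAdd q)),
      map_one' := by simp,
      map_mul' := fun q q' => by simp } with hψF
  set ψ : Multiplicative ℤ × Multiplicative (QQ a b c d) →* Abelianization (SolG a b c d k l) :=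
    (zpowersHom _ TA).coprod ψF with hψ
  have hβ1 : Additive.toMul (β (q1 a b c d)) = X := by
    rw [hβ, q1, Submodule.liftQ_apply, hαapp]
    simp
  have hβ2 : Additive.toMul (β (q2 a b c d)) = Y := by
    rw [hβ, q2, Submodule.liftQ_apply, hαapp]
    simp
  have hgen : ∀ i : Fin 4,
      ψ (φA a b c d k l (Abelianization.of (.of i))) = Abelianization.of (.of i) := by
    intro i
    rw [φA_of]
    fin_cases i
    · simpa [hψ, MonoidHom.coprod_apply, zpowersHom_apply, hψF, φ2fun] using hβ1
    · simpa [hψ, MonoidHom.coprod_apply, zpowersHom_apply, hψF, φ2fun] using hβ2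
    · have := hZ1 a b c d k l
      simp only [hψ, MonoidHom.coprod_apply, zpowersHom_apply, hψF, φ2fun]
      simpa using this.symm
    · simp [hψ, MonoidHom.coprod_apply, zpowersHom_apply, hψF, φ2fun, hTA, tS]
  have hcomp : ∀ g, ψ (φA a b c d k l g) = g := by
    intro g
    have h : ψ.comp (φA a b c d k l) = MonoidHom.id _ := by
      apply Abelianization.hom_ext
      apply PresentedGroup.ext
      intro i
      simpa using hgen i
    simpa using DFunLike.congr_fun h g
  have hinj : Function.Injective (φA a b c d k l) := fun x y hxy => by
    rw [← hcomp x, ← hcomp y, hxy]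
  have hsurj : Function.Surjective (φA a b c d k l) := by
    rintro ⟨m, qf⟩
    obtain ⟨w, hw⟩ := Submodule.Quotient.mk_surjective (SS a b c d) (Multiplicative.toAdd qf)
    refine ⟨Abelianization.of ((PresentedGroup.of 3) ^ (Multiplicative.toAdd m)
      * (PresentedGroup.of 0) ^ (w 0) * (PresentedGroup.of 1) ^ (w 1)), ?_⟩
    have hw' : (w 0) • q1 a b c d + (w 1) • q2 a b c d = Multiplicative.toAdd qf := by
      rw [q1, q2, ← Submodule.Quotient.mk_smul, ← Submodule.Quotient.mk_smul,
        ← Submodule.Quotient.mk_add, ← hw]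
      congr 1
      funext i; fin_cases i <;> simp [Pi.single_apply]
    simp only [map_mul, map_zpow, φA_of]
    refine Prod.ext ?_ ?_
    · simp [φ2fun, ← ofAdd_zsmul]
    · have hsnd : ∀ (p : Multiplicative ℤ × Multiplicative (QQ a b c d)) (z : ℤ),
          (p ^ z).2 = p.2 ^ z := fun _ _ => rfl
      simp only [φ2fun, Matrix.cons_val_zero, Matrix.cons_val_one, Matrix.head_cons,
        Matrix.cons_val_three, Matrix.cons_val_two, Matrix.tail_cons,
        Prod.snd_mul, hsnd, one_zpow, one_mul]
      rw [← ofAdd_zsmul, ← ofAdd_zsmul, ← ofAdd_add, hw']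
      simp
  refine ⟨MulEquiv.ofBijective (φA a b c d k l) ⟨hinj, hsurj⟩, ?_⟩
  show φA a b c d k l (Abelianization.of (tS a b c d k l)) = _
  rw [show tS a b c d k l = (PresentedGroup.of 3 : SolG a b c d k l) from rfl, φA_of]
  simp [φ2fun]

end Stmt13
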